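/- For all m ≥ 1, the sum of kernel numbers satisfies 2·∑_{i=1}^{m} k_i = k_m + k_{m+2} + m - 1. -/

import Mathlib

/-- Tribonacci numbers, index-shifted so that `trib n` represents t_{n-2}:
`trib 0 = t₋₂ = 0`, `trib 1 = t₋₁ = 1`, `trib 2 = t₀ = 1`, and
`trib (n+3) = trib (n+2) + trib (n+1) + trib n`. -/
def trib : ℕ → ℕ
  | 0 => 0
  | 1 => 1
  | 2 => 1
  | n + 3 => trib (n + 2) + trib (n + 1) + trib n

/-- Kernel numbers: k₀ = 0, k₁ = k₂ = 1, k_m = k_{m-1} + k_{m-2} + k_{m-3} - 1 for m ≥ 3. -/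
def ker : ℕ → ℕ
  | 0 => 0
  | 1 => 1
  | 2 => 1
  | n + 3 => ker (n + 2) + ker (n + 1) + ker n - 1

lemma ker_pos : ∀ n, 1 ≤ n → 1 ≤ ker n
  | 1, _ => le_refl _
  | 2, _ => le_refl _
  | (n+3), _ => by
    have h := ker_pos (n+2) (by omega)
    have h' := ker_pos (n+1) (by omega)
    show 1 ≤ ker (n+2) + ker (n+1) + ker n - 1
    omega

lemma ker_cast (n : ℕ) :
    (ker (n+3) : ℤ) = ker (n+2) + ker (n+1) + ker n - 1 := by
  have h := ker_pos (n+1) (by omega)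
  show ((ker (n+2) + ker (n+1) + ker n - 1 : ℕ) : ℤ) = _
  omega

/-- For all m ≥ 1, 2·∑_{i=1}^{m} k_i = k_m + k_{m+2} + m - 1 (stated over ℤ). -/
theorem two_mul_sum_ker (m : ℕ) (hm : 1 ≤ m) :
    2 * ∑ i ∈ Finset.Icc 1 m, (ker i : ℤ) =
      (ker m : ℤ) + ker (m + 2) + m - 1 := by
  induction m with
  | zero => omega
  | succ n ih =>
    rcases Nat.eq_or_lt_of_le hm with h | h
    · simp [← h]
      decide
    · have hn : 1 ≤ n := by omega
      rw [Finset.sum_Icc_succ_top (by omega), mul_add, ih hn,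
        show n + 1 + 2 = n + 3 from rfl, ker_cast n]
      have h2 := ker_cast (n - 1)
      have hm1 : n - 1 + 3 = n + 2 := by omega
      have hm2 : n - 1 + 2 = n + 1 := by omega
      have hm3 : n - 1 + 1 = n := by omega
      rw [hm1, hm2, hm3] at h2
      push_cast
      omega
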